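/- (q-vague convergence of the SIC prior to a Dirac measure as λ → ∞.) Fix σ > 0 and ε > 0, and let (λ_n) be a sequence of positive reals with λ_n → +∞. For each n let π_n be the measure on ℝ with Lebesgue density β ↦ exp(−(λ_n/(2σ²))·β²/(β² + ε²)). Then there exist positive reals a_n (one may take a_n = 1) such that for every continuous real-valued function f on ℝ with compact support, a_n·∫_ℝ f(β)·exp(−(λ_n/(2σ²))·β²/(β² + ε²)) dβ → f(0) as n → ∞; that is, π_n converges q-vaguely to the Dirac measure at 0. -/

import Mathlib

open Filter MeasureTheory

set_option maxHeartbeats 1000000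

private lemma sicg_cont (σ ε l : ℝ) (hε : 0 < ε) :
    Continuous (fun β : ℝ => Real.exp (-(l / (2 * σ ^ 2)) * (β ^ 2 / (β ^ 2 + ε ^ 2)))) := by
  apply Real.continuous_exp.comp
  apply Continuous.mul continuous_const
  exact (continuous_pow 2).div ((continuous_pow 2).add continuous_const)
    (fun β => by positivity)

/-- **q-vague convergence of the SIC prior to a Dirac measure as λ → ∞.**
With `σ, ε > 0` fixed and `λ_n → ∞`, there are positive scalars `a_n` (one may
take `a_n = 1`) such that for every continuous compactly supported `f`,
`a_n ∫ f(β) exp(−(λ_n/(2σ²)) β²/(β² + ε²)) dβ → f(0)`. -/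
theorem sic_prior_qvague_dirac (σ ε : ℝ) (hσ : 0 < σ) (hε : 0 < ε)
    (lam : ℕ → ℝ) (hlam_pos : ∀ n, 0 < lam n)
    (hlam : Tendsto lam atTop atTop) :
    ∃ a : ℕ → ℝ, (∀ n, 0 < a n) ∧
      ∀ f : ℝ → ℝ, Continuous f → HasCompactSupport f →
        Tendsto (fun n =>
            a n * ∫ β : ℝ, f β * Real.exp (-(lam n / (2 * σ ^ 2)) * (β ^ 2 / (β ^ 2 + ε ^ 2))))
          atTop (nhds (f 0)) := by
  classical
  set g : ℕ → ℝ → ℝ :=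
    fun n β => Real.exp (-(lam n / (2 * σ ^ 2)) * (β ^ 2 / (β ^ 2 + ε ^ 2))) with hg_def
  have hg_cont : ∀ n, Continuous (g n) := fun n => sicg_cont σ ε (lam n) hε
  have hg_pos : ∀ n β, 0 < g n β := fun n β => Real.exp_pos _
  set m : ℕ → ℝ := fun n => ∫ β in Set.Icc (-1 : ℝ) 1, g n β with hm_def
  have hg_intOn : ∀ n (x y : ℝ), IntegrableOn (g n) (Set.Icc x y) :=
    fun n x y => (hg_cont n).integrableOn_Icc
  have hm_pos : ∀ n, 0 < m n := by
    intro n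
    have : 0 < ∫ β in Set.Icc (-1 : ℝ) 1, g n β := by
      rw [setIntegral_pos_iff_support_of_nonneg_ae
        (Filter.Eventually.of_forall fun β => (hg_pos n β).le) (hg_intOn n (-1) 1)]
      have hsupp : Function.support (g n) = Set.univ := by
        ext β; simp [Function.mem_support, (hg_pos n β).ne']
      rw [hsupp, Set.univ_inter, Real.volume_Icc]
      norm_num
    exact this
  refine ⟨fun n => (m n)⁻¹, fun n => inv_pos.2 (hm_pos n), ?_⟩
  intro f hf hcf
  -- bound on f
  obtain ⟨M, hM⟩ := hcf.exists_bound_of_continuous hf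
  have hM0 : 0 ≤ M := le_trans (norm_nonneg (f 0)) (hM 0)
  -- support of f inside Icc (-L) L with L ≥ 1
  obtain ⟨r0, hr0⟩ := hcf.isBounded.subset_closedBall 0
  set L : ℝ := max r0 1 with hL_def
  have hL1 : (1 : ℝ) ≤ L := le_max_right _ _
  have hL0 : (0 : ℝ) < L := lt_of_lt_of_le one_pos hL1
  have hsuppL : ∀ β, β ∉ Set.Icc (-L) L → f β = 0 := by
    intro β hβ
    apply image_eq_zero_of_notMem_tsupport
    intro hmem
    apply hβ
    have := hr0 hmem
    rw [Real.closedBall_eq_Icc] at this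
    constructor
    · calc -L ≤ -r0 := by simp [hL_def]
        _ ≤ β := by simpa using this.1
    · exact le_trans (by simpa using this.2) (le_max_left _ _)
  -- integrability of f * g
  have hfg_int : ∀ n, Integrable (fun β => f β * g n β) := by
    intro n
    exact (hf.mul (hg_cont n)).integrable_of_hasCompactSupport (hcf.mul_right)
  rw [Metric.tendsto_atTop]
  intro η hη
  -- continuity of f at 0 : pick δ
  obtain ⟨δ0, hδ0, hδ0f⟩ := Metric.continuousAt_iff.1 hf.continuousAt (η / 4) (by linarith)
  set δ : ℝ := min (δ0 / 2) 1 with hδ_def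
  have hδ_pos : 0 < δ := lt_min (by linarith) one_pos
  have hδ1 : δ ≤ 1 := min_le_right _ _
  have hδL : δ ≤ L := le_trans hδ1 hL1
  have hfδ : ∀ β ∈ Set.Icc (-δ) δ, |f β - f 0| ≤ η / 4 := by
    intro β hβ
    have h1 : dist β 0 < δ0 := by
      rw [Real.dist_eq, sub_zero]
      have h2 := abs_le.2 ⟨hβ.1, hβ.2⟩
      calc |β| ≤ δ := h2
        _ ≤ δ0 / 2 := min_le_left _ _
        _ < δ0 := by linarith
    have h3 := hδ0f h1
    rw [Real.dist_eq] at h3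
    exact h3.le
  -- exponential rates
  set c : ℝ := δ ^ 2 / (2 * σ ^ 2 * (δ ^ 2 + ε ^ 2)) with hc_def
  set r : ℝ := δ ^ 2 / (8 * σ ^ 2 * (δ ^ 2 + ε ^ 2)) with hr_def
  have hc_pos : 0 < c := by positivity
  have hr_pos : 0 < r := by positivity
  have hcr : 0 < c - r := by
    rw [hc_def, hr_def, div_sub_div _ _ (by positivity) (by positivity)]
    apply div_pos
    · have haux : 0 < σ ^ 2 * (δ ^ 2 + ε ^ 2) * δ ^ 2 := by positivity
      nlinarith [haux]
    · positivity
  set ρ : ℝ := ε * δ / (2 * (δ + ε)) with hρ_def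
  have hρ_pos : 0 < ρ := by positivity
  have hρδ : ρ ≤ δ / 2 := by
    rw [hρ_def, div_le_div_iff₀ (by positivity) (by positivity)]
    nlinarith
  have hρ1 : ρ ≤ 1 := le_trans hρδ (by linarith)
  -- lower bound for g on [-ρ, ρ]
  have hg_lb : ∀ n, ∀ β ∈ Set.Icc (-ρ) ρ, Real.exp (-(lam n * r)) ≤ g n β := by
    intro n β hβ
    apply Real.exp_le_exp.2
    have hβ2 : β ^ 2 ≤ ρ ^ 2 := by
      have h2 := abs_le.2 ⟨hβ.1, hβ.2⟩
      nlinarith [abs_nonneg β, sq_abs β]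
    have hkey : ρ ^ 2 ≤ δ ^ 2 * ε ^ 2 / (4 * (δ ^ 2 + ε ^ 2)) := by
      rw [hρ_def, div_pow, div_le_div_iff₀ (by positivity) (by positivity)]
      nlinarith [sq_nonneg (δ - ε), mul_pos hδ_pos hε]
    have hfrac : β ^ 2 / (β ^ 2 + ε ^ 2) ≤ 2 * σ ^ 2 * r := by
      have h1 : β ^ 2 / (β ^ 2 + ε ^ 2) ≤ ρ ^ 2 / ε ^ 2 :=
        div_le_div₀ (by positivity) hβ2 (by positivity) (by nlinarith [sq_nonneg β])
      have h2 : ρ ^ 2 / ε ^ 2 ≤ 2 * σ ^ 2 * r := by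
        calc ρ ^ 2 / ε ^ 2 ≤ (δ ^ 2 * ε ^ 2 / (4 * (δ ^ 2 + ε ^ 2))) / ε ^ 2 := by gcongr
          _ = 2 * σ ^ 2 * r := by rw [hr_def]; field_simp; ring
      linarith
    have hmain : lam n / (2 * σ ^ 2) * (β ^ 2 / (β ^ 2 + ε ^ 2)) ≤ lam n * r := by
      calc lam n / (2 * σ ^ 2) * (β ^ 2 / (β ^ 2 + ε ^ 2))
          ≤ lam n / (2 * σ ^ 2) * (2 * σ ^ 2 * r) :=
            mul_le_mul_of_nonneg_left hfrac (le_of_lt (div_pos (hlam_pos n) (by positivity)))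
        _ = lam n * r := by field_simp
    rw [neg_mul]
    exact neg_le_neg hmain
  -- upper bound for g off (-δ, δ)
  have hg_ub : ∀ n, ∀ β : ℝ, δ ≤ |β| → g n β ≤ Real.exp (-(lam n * c)) := by
    intro n β hβ
    apply Real.exp_le_exp.2
    have hβ2 : δ ^ 2 ≤ β ^ 2 := by nlinarith [sq_abs β, abs_nonneg β]
    have hfrac : 2 * σ ^ 2 * c ≤ β ^ 2 / (β ^ 2 + ε ^ 2) := by
      have h1 : 2 * σ ^ 2 * c = δ ^ 2 / (δ ^ 2 + ε ^ 2) := by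
        rw [hc_def]; field_simp
      rw [h1, div_le_div_iff₀ (by positivity) (by positivity)]
      nlinarith [sq_nonneg ε]
    have hmain : lam n * c ≤ lam n / (2 * σ ^ 2) * (β ^ 2 / (β ^ 2 + ε ^ 2)) := by
      calc lam n * c = lam n / (2 * σ ^ 2) * (2 * σ ^ 2 * c) := by field_simp
        _ ≤ lam n / (2 * σ ^ 2) * (β ^ 2 / (β ^ 2 + ε ^ 2)) :=
            mul_le_mul_of_nonneg_left hfrac (le_of_lt (div_pos (hlam_pos n) (by positivity)))
    rw [neg_mul]
    exact neg_le_neg hmain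
  -- membership in the complement of [-δ, δ] gives δ ≤ |β|
  have habs : ∀ β : ℝ, β ∉ Set.Icc (-δ) δ → δ ≤ |β| := by
    intro β hβ
    rw [Set.mem_Icc, not_and_or, not_le, not_le] at hβ
    rcases hβ with h | h
    · rw [abs_of_neg (by linarith)]; linarith
    · rw [abs_of_pos (by linarith)]; linarith
  -- lower bound for m n
  have hm_lb : ∀ n, 2 * ρ * Real.exp (-(lam n * r)) ≤ m n := by
    intro n
    have hconst : IntegrableOn (fun _ : ℝ => Real.exp (-(lam n * r))) (Set.Icc (-ρ) ρ) :=
      integrableOn_const measure_Icc_lt_top.ne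
    have h1 : ∫ _ in Set.Icc (-ρ) ρ, Real.exp (-(lam n * r)) ≤ ∫ β in Set.Icc (-ρ) ρ, g n β :=
      setIntegral_mono_on hconst (hg_intOn n _ _) measurableSet_Icc (hg_lb n)
    have h2 : ∫ _ in Set.Icc (-ρ) ρ, Real.exp (-(lam n * r)) = 2 * ρ * Real.exp (-(lam n * r)) := by
      rw [setIntegral_const, Real.volume_real_Icc_of_le (by linarith), smul_eq_mul]
      ring
    have h3 : ∫ β in Set.Icc (-ρ) ρ, g n β ≤ m n :=
      setIntegral_mono_set (hg_intOn n (-1) 1)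
        (Filter.Eventually.of_forall fun β => (hg_pos n β).le)
        (HasSubset.Subset.eventuallyLE (Set.Icc_subset_Icc (by linarith) hρ1))
    linarith
  -- splitting a set integral over Icc (-b) b at Icc (-δ) δ
  have hsplit : ∀ (h : ℝ → ℝ) (b : ℝ), δ ≤ b → IntegrableOn h (Set.Icc (-b) b) →
      ∫ β in Set.Icc (-b) b, h β =
        (∫ β in Set.Icc (-δ) δ, h β) + ∫ β in Set.Icc (-b) b \ Set.Icc (-δ) δ, h β := by
    intro h b hb hint
    have hsub : Set.Icc (-δ) δ ⊆ Set.Icc (-b) b := Set.Icc_subset_Icc (by linarith) hb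
    conv_lhs => rw [← Set.union_diff_cancel hsub]
    exact setIntegral_union disjoint_sdiff_self_right
      (measurableSet_Icc.diff measurableSet_Icc)
      (hint.mono_set hsub) (hint.mono_set Set.diff_subset)
  -- main estimate for each n
  have hkey : ∀ n, |(m n)⁻¹ * (∫ β : ℝ, f β * g n β) - f 0| ≤
      η / 4 + (m n)⁻¹ * (M * (2 * L + 2) * Real.exp (-(lam n * c))) := by
    intro n
    set TL := Set.Icc (-L) L \ Set.Icc (-δ) δ with hTL_def
    set T1 := Set.Icc (-1 : ℝ) 1 \ Set.Icc (-δ) δ with hT1_def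
    have hInt1 : (∫ β : ℝ, f β * g n β) = ∫ β in Set.Icc (-L) L, f β * g n β :=
      (setIntegral_eq_integral_of_forall_compl_eq_zero
        (fun β hβ => by rw [hsuppL β hβ, zero_mul])).symm
    have hIsplit : (∫ β : ℝ, f β * g n β) =
        (∫ β in Set.Icc (-δ) δ, f β * g n β) + ∫ β in TL, f β * g n β := by
      rw [hInt1]; exact hsplit _ L hδL (hfg_int n).integrableOn
    have hmsplit : m n = (∫ β in Set.Icc (-δ) δ, g n β) + ∫ β in T1, g n β :=
      hsplit _ 1 hδ1 (hg_intOn n (-1) 1)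
    -- bound piece A : ∫_S (f - f0) g
    have hA : |(∫ β in Set.Icc (-δ) δ, f β * g n β) - f 0 * ∫ β in Set.Icc (-δ) δ, g n β| ≤
        η / 4 * ∫ β in Set.Icc (-δ) δ, g n β := by
      have hrw : (∫ β in Set.Icc (-δ) δ, f β * g n β) - f 0 * ∫ β in Set.Icc (-δ) δ, g n β =
          ∫ β in Set.Icc (-δ) δ, (f β - f 0) * g n β := by
        rw [← integral_const_mul, ← integral_sub ((hfg_int n).integrableOn)
          ((hg_intOn n (-δ) δ).const_mul (f 0))]
        congr 1; ext β; ring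
      rw [hrw]
      have h1 : |∫ β in Set.Icc (-δ) δ, (f β - f 0) * g n β| ≤
          ∫ β in Set.Icc (-δ) δ, |f β - f 0| * |g n β| := by
        have h1a := norm_integral_le_integral_norm (μ := volume.restrict (Set.Icc (-δ) δ))
            (fun β => (f β - f 0) * g n β)
        simpa only [Real.norm_eq_abs, abs_mul] using h1a
      have h2 : ∫ β in Set.Icc (-δ) δ, |f β - f 0| * |g n β| ≤
          ∫ β in Set.Icc (-δ) δ, η / 4 * g n β := by
        apply setIntegral_mono_on
        · exact (((hf.sub continuous_const).abs.mul (hg_cont n).abs).integrableOn_Icc)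
        · exact (hg_intOn n (-δ) δ).const_mul _
        · exact measurableSet_Icc
        · intro β hβ
          rw [abs_of_pos (hg_pos n β)]
          exact mul_le_mul_of_nonneg_right (hfδ β hβ) (hg_pos n β).le
      rw [integral_const_mul] at h2
      linarith
    -- bound piece B : tail of f g
    have hB : |∫ β in TL, f β * g n β| ≤ M * Real.exp (-(lam n * c)) * (2 * L) := by
      have h1 : |∫ β in TL, f β * g n β| ≤
          M * Real.exp (-(lam n * c)) * (volume TL).toReal := by
        rw [← Real.norm_eq_abs]
        apply norm_setIntegral_le_of_norm_le_const
          (lt_of_le_of_lt (measure_mono Set.diff_subset) measure_Icc_lt_top)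
        intro β hβ
        rw [Real.norm_eq_abs, abs_mul, abs_of_pos (hg_pos n β)]
        exact mul_le_mul (hM β) (hg_ub n β (habs β hβ.2)) (hg_pos n β).le hM0
      have h2 : (volume TL).toReal ≤ 2 * L := by
        have h3 : volume TL ≤ volume (Set.Icc (-L) L) := measure_mono Set.diff_subset
        have h4 : (volume TL).toReal ≤ (volume (Set.Icc (-L) L)).toReal :=
          ENNReal.toReal_mono (by rw [Real.volume_Icc]; exact ENNReal.ofReal_ne_top) h3
        rw [Real.volume_Icc, ENNReal.toReal_ofReal (by linarith)] at h4
        linarith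
      calc |∫ β in TL, f β * g n β| ≤ M * Real.exp (-(lam n * c)) * (volume TL).toReal := h1
        _ ≤ M * Real.exp (-(lam n * c)) * (2 * L) :=
            mul_le_mul_of_nonneg_left h2 (by positivity)
    -- bound piece D : tail of f0 g
    have hD : |f 0 * ∫ β in T1, g n β| ≤ M * Real.exp (-(lam n * c)) * 2 := by
      have h1 : |∫ β in T1, g n β| ≤ Real.exp (-(lam n * c)) * (volume T1).toReal := by
        rw [← Real.norm_eq_abs]
        apply norm_setIntegral_le_of_norm_le_const
          (lt_of_le_of_lt (measure_mono Set.diff_subset) measure_Icc_lt_top)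
        intro β hβ
        rw [Real.norm_eq_abs, abs_of_pos (hg_pos n β)]
        exact hg_ub n β (habs β hβ.2)
      have h2 : (volume T1).toReal ≤ 2 := by
        have h3 : volume T1 ≤ volume (Set.Icc (-1 : ℝ) 1) := measure_mono Set.diff_subset
        have h4 : (volume T1).toReal ≤ (volume (Set.Icc (-1 : ℝ) 1)).toReal :=
          ENNReal.toReal_mono (by rw [Real.volume_Icc]; exact ENNReal.ofReal_ne_top) h3
        rw [Real.volume_Icc, ENNReal.toReal_ofReal (by norm_num)] at h4
        linarith
      have hf0 : |f 0| ≤ M := hM 0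
      calc |f 0 * ∫ β in T1, g n β| = |f 0| * |∫ β in T1, g n β| := abs_mul _ _
        _ ≤ M * (Real.exp (-(lam n * c)) * (volume T1).toReal) :=
            mul_le_mul hf0 h1 (abs_nonneg _) hM0
        _ ≤ M * (Real.exp (-(lam n * c)) * 2) := by
            apply mul_le_mul_of_nonneg_left _ hM0
            exact mul_le_mul_of_nonneg_left h2 (Real.exp_pos _).le
        _ = M * Real.exp (-(lam n * c)) * 2 := by ring
    -- the set-integral of g over S is at most m n
    have hSm : ∫ β in Set.Icc (-δ) δ, g n β ≤ m n :=
      setIntegral_mono_set (hg_intOn n (-1) 1)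
        (Filter.Eventually.of_forall fun β => (hg_pos n β).le)
        (HasSubset.Subset.eventuallyLE (Set.Icc_subset_Icc (by linarith) hδ1))
    -- combine
    have htotal : |(∫ β : ℝ, f β * g n β) - f 0 * m n| ≤
        η / 4 * m n + M * (2 * L + 2) * Real.exp (-(lam n * c)) := by
      have hdecomp : (∫ β : ℝ, f β * g n β) - f 0 * m n =
          ((∫ β in Set.Icc (-δ) δ, f β * g n β) - f 0 * ∫ β in Set.Icc (-δ) δ, g n β) +
          (∫ β in TL, f β * g n β) - f 0 * ∫ β in T1, g n β := by
        rw [hIsplit, hmsplit]; ring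
      have hSnn : (0:ℝ) ≤ ∫ β in Set.Icc (-δ) δ, g n β :=
        setIntegral_nonneg measurableSet_Icc fun β _ => (hg_pos n β).le
      calc |(∫ β : ℝ, f β * g n β) - f 0 * m n|
          ≤ |(∫ β in Set.Icc (-δ) δ, f β * g n β) - f 0 * ∫ β in Set.Icc (-δ) δ, g n β| +
            |∫ β in TL, f β * g n β| + |f 0 * ∫ β in T1, g n β| := by
            rw [hdecomp]
            exact (abs_sub _ _).trans (add_le_add_left (abs_add_le _ _) _)
        _ ≤ η / 4 * (∫ β in Set.Icc (-δ) δ, g n β) + M * Real.exp (-(lam n * c)) * (2 * L) +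
            M * Real.exp (-(lam n * c)) * 2 := by
            exact add_le_add (add_le_add hA hB) hD
        _ ≤ η / 4 * m n + M * (2 * L + 2) * Real.exp (-(lam n * c)) := by
            have h5 := mul_le_mul_of_nonneg_left hSm (by linarith : (0:ℝ) ≤ η / 4)
            have h6 : M * Real.exp (-(lam n * c)) * (2 * L) + M * Real.exp (-(lam n * c)) * 2 =
                M * (2 * L + 2) * Real.exp (-(lam n * c)) := by ring
            linarith
    have hmn := hm_pos n
    have hmninv : (0:ℝ) < (m n)⁻¹ := inv_pos.2 hmn
    have heq : (m n)⁻¹ * (∫ β : ℝ, f β * g n β) - f 0 =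
        (m n)⁻¹ * ((∫ β : ℝ, f β * g n β) - f 0 * m n) := by
      field_simp
    rw [heq, abs_mul, abs_of_pos hmninv]
    calc (m n)⁻¹ * |(∫ β : ℝ, f β * g n β) - f 0 * m n|
        ≤ (m n)⁻¹ * (η / 4 * m n + M * (2 * L + 2) * Real.exp (-(lam n * c))) :=
          mul_le_mul_of_nonneg_left htotal hmninv.le
      _ = η / 4 + (m n)⁻¹ * (M * (2 * L + 2) * Real.exp (-(lam n * c))) := by
          rw [mul_add, mul_comm (η / 4) (m n), ← mul_assoc, inv_mul_cancel₀ hmn.ne', one_mul]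
  -- the error term tends to 0
  have herr : ∀ n, (m n)⁻¹ * (M * (2 * L + 2) * Real.exp (-(lam n * c))) ≤
      M * (2 * L + 2) / (2 * ρ) * Real.exp (-(lam n * (c - r))) := by
    intro n
    have h1 : (m n)⁻¹ ≤ (2 * ρ * Real.exp (-(lam n * r)))⁻¹ :=
      inv_anti₀ (by positivity) (hm_lb n)
    have h2 : (m n)⁻¹ * Real.exp (-(lam n * c)) ≤
        (2 * ρ * Real.exp (-(lam n * r)))⁻¹ * Real.exp (-(lam n * c)) :=
      mul_le_mul_of_nonneg_right h1 (Real.exp_pos _).le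
    have h3 : (2 * ρ * Real.exp (-(lam n * r)))⁻¹ * Real.exp (-(lam n * c)) =
        (2 * ρ)⁻¹ * Real.exp (-(lam n * (c - r))) := by
      rw [mul_inv, mul_assoc, ← Real.exp_neg, ← Real.exp_add]
      congr 2
      ring
    calc (m n)⁻¹ * (M * (2 * L + 2) * Real.exp (-(lam n * c)))
        = M * (2 * L + 2) * ((m n)⁻¹ * Real.exp (-(lam n * c))) := by ring
      _ ≤ M * (2 * L + 2) * ((2 * ρ)⁻¹ * Real.exp (-(lam n * (c - r)))) := by
          apply mul_le_mul_of_nonneg_left _ (by positivity)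
          rw [← h3]; exact h2
      _ = M * (2 * L + 2) / (2 * ρ) * Real.exp (-(lam n * (c - r))) := by ring
  have htend : Tendsto (fun n => M * (2 * L + 2) / (2 * ρ) * Real.exp (-(lam n * (c - r))))
      atTop (nhds 0) := by
    have h1 : Tendsto (fun n => -(lam n * (c - r))) atTop atBot :=
      tendsto_neg_atTop_atBot.comp (hlam.atTop_mul_const hcr)
    have h2 : Tendsto (fun n => Real.exp (-(lam n * (c - r)))) atTop (nhds 0) :=
      Real.tendsto_exp_atBot.comp h1
    simpa using h2.const_mul (M * (2 * L + 2) / (2 * ρ))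
  have hev : ∀ᶠ n in atTop,
      M * (2 * L + 2) / (2 * ρ) * Real.exp (-(lam n * (c - r))) < η / 4 :=
    htend.eventually_lt_const (by linarith)
  obtain ⟨N, hN⟩ := eventually_atTop.1 hev
  refine ⟨N, fun n hn => ?_⟩
  rw [Real.dist_eq]
  calc |(m n)⁻¹ * (∫ β : ℝ, f β * g n β) - f 0|
      ≤ η / 4 + (m n)⁻¹ * (M * (2 * L + 2) * Real.exp (-(lam n * c))) := hkey n
    _ ≤ η / 4 + M * (2 * L + 2) / (2 * ρ) * Real.exp (-(lam n * (c - r))) := by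
        linarith [herr n]
    _ < η / 4 + η / 4 := by linarith [hN n hn]
    _ < η := by linarith
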